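/- If a permutation p of {1,...,n} avoids the pattern 123 (has no increasing subsequence of length 3) and n ≥ 9, then p² contains an increasing subsequence of length 3. -/

import Mathlib

open Function Finset

/-- Erdős–Szekeres (copied from Mathlib Archive, Wiedijk100Theorems). -/
theorem my_erdos_szekeres {α : Type*} [LinearOrder α] {r s n : ℕ} {f : Fin n → α}
    (hn : r * s < n) (hf : Injective f) :
    (∃ t : Finset (Fin n), r < #t ∧ StrictMonoOn f ↑t) ∨
      ∃ t : Finset (Fin n), s < #t ∧ StrictAntiOn f ↑t := by
  let inc_sequences_ending_in : Fin n → Finset (Finset (Fin n)) := fun i =>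
    univ.powerset.filter fun t => Finset.max t = i ∧ StrictMonoOn f ↑t
  let dec_sequences_ending_in : Fin n → Finset (Finset (Fin n)) := fun i =>
    univ.powerset.filter fun t => Finset.max t = i ∧ StrictAntiOn f ↑t
  have inc_i : ∀ i, {i} ∈ inc_sequences_ending_in i := fun i => by
    simp [inc_sequences_ending_in, StrictMonoOn]
  have dec_i : ∀ i, {i} ∈ dec_sequences_ending_in i := fun i => by
    simp [dec_sequences_ending_in, StrictAntiOn]
  let ab' : Fin n → ℕ × ℕ := by
    intro i
    apply
      (max' ((inc_sequences_ending_in i).image card) (Nonempty.image ⟨{i}, inc_i i⟩ _),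
        max' ((dec_sequences_ending_in i).image card) (Nonempty.image ⟨{i}, dec_i i⟩ _))
  generalize hab : ab' = ab
  rsuffices ⟨i, hi⟩ : ∃ i, r < (ab i).1 ∨ s < (ab i).2
  · refine Or.imp ?_ ?_ hi
    on_goal 1 =>
      have : (ab i).1 ∈ image card (inc_sequences_ending_in i) := by
        simp only [← hab]; exact max'_mem _ (Nonempty.image ⟨{i}, inc_i i⟩ _)
    on_goal 2 =>
      have : (ab i).2 ∈ image card (dec_sequences_ending_in i) := by
        simp only [← hab]; exact max'_mem _ (Nonempty.image ⟨{i}, dec_i i⟩ _)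
    all_goals
      intro hi
      rw [mem_image] at this
      obtain ⟨t, ht₁, ht₂⟩ := this
      refine ⟨t, by rwa [ht₂], ?_⟩
      rw [mem_filter] at ht₁
      apply ht₁.2.2
  have : Injective ab := by
    simp only [← hab]
    apply Function.Injective.of_lt_imp_ne
    intro i j k q
    injection q with q₁ q₂
    cases lt_or_gt_of_ne fun _ => ne_of_lt ‹i < j› (hf ‹f i = f j›)
    on_goal 1 =>
      apply ne_of_lt _ q₁
      have : (ab' i).1 ∈ image card (inc_sequences_ending_in i) := by exact max'_mem _ (Nonempty.image ⟨{i}, inc_i i⟩ _)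
    on_goal 2 =>
      apply ne_of_lt _ q₂
      have : (ab' i).2 ∈ image card (dec_sequences_ending_in i) := by exact max'_mem _ (Nonempty.image ⟨{i}, dec_i i⟩ _)
    all_goals
      rw [Nat.lt_iff_add_one_le]
      apply le_max'
      rw [mem_image] at this ⊢
      rcases this with ⟨t, ht₁, ht₂⟩
      rw [mem_filter] at ht₁
      have : t.max = i := by simp only [ht₁.2.1]
      refine ⟨insert j t, ?_, ?_⟩
      · rw [mem_filter]
        refine ⟨?_, ?_, ?_⟩
        · rw [mem_powerset]; apply subset_univ
        · convert max_insert (a := j) (s := t)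
          rw [ht₁.2.1, max_eq_left]
          apply WithBot.coe_le_coe.mpr (le_of_lt ‹i < j›)
        simp only [StrictMonoOn, StrictAntiOn, coe_insert, Set.mem_insert_iff, mem_coe]
        rintro x ⟨rfl | _⟩ y ⟨rfl | _⟩ _
        · apply (irrefl _ ‹j < j›).elim
        · exfalso
          apply not_le_of_gt (_root_.trans ‹i < j› ‹j < y›) (le_max_of_eq ‹y ∈ t› ‹t.max = i›)
        · first
          | apply lt_of_le_of_lt _ ‹f i < f j›
          | apply lt_of_lt_of_le ‹f j < f i› _
          rcases lt_or_eq_of_le (le_max_of_eq ‹x ∈ t› ‹t.max = i›) with (_ | rfl)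
          · apply le_of_lt (ht₁.2.2 ‹x ∈ t› (mem_of_max ‹t.max = i›) ‹x < i›)
          · rfl
        · apply ht₁.2.2 ‹x ∈ t› ‹y ∈ t› ‹x < y›
      · rw [card_insert_of_notMem, ht₂]
        intro
        apply not_le_of_gt ‹i < j› (le_max_of_eq ‹j ∈ t› ‹t.max = i›)
  by_contra! q
  let ran : Finset (ℕ × ℕ) := (range r).image Nat.succ ×ˢ (range s).image Nat.succ
  have : image ab univ ⊆ ran := by
    rintro ⟨x₁, x₂⟩
    simp only [ran, mem_image, exists_prop, mem_range, mem_univ, mem_product, true_and,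
      Prod.ext_iff]
    rintro ⟨i, rfl, rfl⟩
    specialize q i
    have z : 1 ≤ (ab i).1 ∧ 1 ≤ (ab i).2 := by
      simp only [← hab]
      constructor <;>
        · apply le_max'
          rw [mem_image]
          exact ⟨{i}, by solve_by_elim, card_singleton i⟩
    exact ⟨⟨(ab i).1 - 1, by omega⟩, (ab i).2 - 1, by omega⟩
  apply not_le_of_gt hn
  simpa [ran, Nat.succ_injective, card_image_of_injective, ‹Injective ab›] using card_le_card this

theorem sq_contains_123_of_avoids_123 {n : ℕ} (hn : 9 ≤ n) (p : Equiv.Perm (Fin n))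
    (h : ¬ ∃ i j k : Fin n, i < j ∧ j < k ∧ p i < p j ∧ p j < p k) :
    ∃ i j k : Fin n, i < j ∧ j < k ∧ (p * p) i < (p * p) j ∧ (p * p) j < (p * p) k := by
  -- Step 1: since p avoids 123 and n > 2*4, p has a decreasing subsequence of length 5.
  have h8 : 2 * 4 < n := by omega
  rcases my_erdos_szekeres (r := 2) (s := 4) h8 p.injective with ⟨t, ht, hmono⟩ | ⟨t, ht, hanti⟩
  · -- increasing subsequence of length 3 in p: contradiction
    exfalso
    have h3 : 3 ≤ t.card := ht
    set e := t.orderEmbOfCardLe h3 with he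
    exact h ⟨e 0, e 1, e 2, e.strictMono (by decide), e.strictMono (by decide),
      hmono (t.orderEmbOfCardLe_mem h3 0) (t.orderEmbOfCardLe_mem h3 1) (e.strictMono (by decide)),
      hmono (t.orderEmbOfCardLe_mem h3 1) (t.orderEmbOfCardLe_mem h3 2) (e.strictMono (by decide))⟩
  · have h5 : 5 ≤ t.card := ht
    set e := t.orderEmbOfCardLe h5 with he
    have hem : ∀ a, e a ∈ t := fun a => t.orderEmbOfCardLe_mem h5 a
    -- p is strictly decreasing on e 0 < e 1 < ... < e 4
    have hpd : ∀ a b : Fin 5, a < b → p (e b) < p (e a) := fun a b hab =>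
      hanti (hem a) (hem b) (e.strictMono hab)
    -- Step 2: Erdős–Szekeres on g : Fin 5 → Fin n, g a = (p*p) (e a)
    have hg : Injective fun a : Fin 5 => (p * p) (e a) :=
      (Equiv.injective _).comp e.injective
    rcases my_erdos_szekeres (r := 2) (s := 2) (by norm_num) hg with
      ⟨u, hu, humono⟩ | ⟨u, hu, huanti⟩
    · -- increasing triple in p²
      have h3 : 3 ≤ u.card := hu
      set f := u.orderEmbOfCardLe h3 with hf
      have hfm : ∀ a, f a ∈ u := fun a => u.orderEmbOfCardLe_mem h3 a
      refine ⟨e (f 0), e (f 1), e (f 2),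
        e.strictMono (f.strictMono (by decide)), e.strictMono (f.strictMono (by decide)),
        humono (hfm 0) (hfm 1) (f.strictMono (by decide)),
        humono (hfm 1) (hfm 2) (f.strictMono (by decide))⟩
    · -- decreasing triple in p² on decreasing positions of p: gives 123 in p, contradiction
      exfalso
      have h3 : 3 ≤ u.card := hu
      set f := u.orderEmbOfCardLe h3 with hf
      have hfm : ∀ a, f a ∈ u := fun a => u.orderEmbOfCardLe_mem h3 a
      have d01 : (p * p) (e (f 1)) < (p * p) (e (f 0)) :=
        huanti (hfm 0) (hfm 1) (f.strictMono (by decide))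
      have d12 : (p * p) (e (f 2)) < (p * p) (e (f 1)) :=
        huanti (hfm 1) (hfm 2) (f.strictMono (by decide))
      refine h ⟨p (e (f 2)), p (e (f 1)), p (e (f 0)),
        hpd _ _ (f.strictMono (by decide)), hpd _ _ (f.strictMono (by decide)), ?_, ?_⟩
      · simpa [Equiv.Perm.mul_apply] using d12
      · simpa [Equiv.Perm.mul_apply] using d01
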